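/- arXiv:1012.5102 — 4 statements merged into one kernel-verified Lean document; each statement's English description precedes it below -/
import Mathlib

section
/- Let n ≥ 1, let H : ℝⁿ → ℝ be continuously differentiable, let a, b ∈ ℝⁿ, and suppose H is constant on the closed segment [a,b] = { ta + (1−t)b : 0 ≤ t ≤ 1 }. Let f : ℝ → ℝ be differentiable with sup_{t ∈ ℝ} |f'(t)| < 1, and define u : ℝⁿ → ℝ by u(x) = ((b+a)/2)·x + f(((b−a)/2)·x). Then for every x ∈ ℝⁿ one has (b−a)·∇H(∇u(x)) = 0, i.e. the gradient of H restricted to the range of ∇u is normal to the segment direction b − a. -/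
open scoped RealInnerProductSpace
set_option maxHeartbeats 800000

open InnerProductSpace in
lemma inner_gradient_eq_fderiv {n : ℕ} (H : EuclideanSpace ℝ (Fin n) → ℝ)
    (p y : EuclideanSpace ℝ (Fin n)) :
    ⟪gradient H p, y⟫ = fderiv ℝ H p y := by
  rw [gradient, toDual_symm_apply]

theorem stmt_3 (n : ℕ) (hn : 1 ≤ n) (H : EuclideanSpace ℝ (Fin n) → ℝ)
    (hH : ContDiff ℝ 1 H) (a b : EuclideanSpace ℝ (Fin n)) (c : ℝ)
    (hconst : ∀ t : ℝ, t ∈ Set.Icc (0:ℝ) 1 → H (t • a + (1 - t) • b) = c)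
    (f : ℝ → ℝ) (hf : Differentiable ℝ f)
    (M : ℝ) (hM : M < 1) (hf' : ∀ t : ℝ, |deriv f t| ≤ M)
    (u : EuclideanSpace ℝ (Fin n) → ℝ)
    (hu : ∀ x, u x = ⟪(2:ℝ)⁻¹ • (b + a), x⟫ + f ⟪(2:ℝ)⁻¹ • (b - a), x⟫) :
    ∀ x, ⟪b - a, gradient H (gradient u x)⟫ = 0 := by
  intro x
  set v : EuclideanSpace ℝ (Fin n) := (2:ℝ)⁻¹ • (b + a) with hv
  set w : EuclideanSpace ℝ (Fin n) := (2:ℝ)⁻¹ • (b - a) with hw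
  set s : ℝ := ⟪w, x⟫ with hs
  set m : ℝ := deriv f s with hm
  have hmM : |m| ≤ M := hf' s
  have hm1 : |m| < 1 := lt_of_le_of_lt hmM hM
  -- gradient of u
  have hgrad_u : gradient u x = v + m • w := by
    have hlinv : HasFDerivAt (fun y : EuclideanSpace ℝ (Fin n) => ⟪v, y⟫)
        (innerSL ℝ v) x := (innerSL ℝ v).hasFDerivAt
    have hlinw : HasFDerivAt (fun y : EuclideanSpace ℝ (Fin n) => ⟪w, y⟫)
        (innerSL ℝ w) x := (innerSL ℝ w).hasFDerivAt
    have hfd : HasDerivAt f m s := (hf s).hasDerivAt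
    have h2 : HasFDerivAt (fun y : EuclideanSpace ℝ (Fin n) => f ⟪w, y⟫)
        (m • innerSL ℝ w) x := by
      have hcomp := (hfd.hasFDerivAt).comp x hlinw
      refine hcomp.congr_fderiv ?_
      apply ContinuousLinearMap.ext
      intro y
      simp [mul_comm]
    have hsum : HasFDerivAt u (innerSL ℝ v + m • innerSL ℝ w) x := by
      have := hlinv.add h2
      apply this.congr_of_eventuallyEq
      filter_upwards with y
      rw [hu y]; rfl
    have hD : innerSL ℝ v + m • innerSL ℝ w
        = InnerProductSpace.toDual ℝ (EuclideanSpace ℝ (Fin n)) (v + m • w) := by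
      apply ContinuousLinearMap.ext
      intro y
      simp [InnerProductSpace.toDual_apply_apply, inner_add_left, real_inner_smul_left]
    rw [hD] at hsum
    simpa using hsum.hasGradientAt.gradient
  rw [hgrad_u]
  set p : EuclideanSpace ℝ (Fin n) := v + m • w with hp
  set t₀ : ℝ := (1 - m) / 2 with ht₀
  have ht₀mem : t₀ ∈ Set.Ioo (0:ℝ) 1 := by
    rw [abs_lt] at hm1
    constructor <;> [skip; skip] <;> rw [ht₀] <;> nlinarith [hm1.1, hm1.2]
  have hpeq : b + t₀ • (a - b) = p := by
    rw [hp, hv, hw, ht₀]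
    module
  -- the curve
  set φ : ℝ → ℝ := fun t => H (b + t • (a - b)) with hφ
  have hφconst : ∀ t ∈ Set.Icc (0:ℝ) 1, φ t = c := by
    intro t ht
    have : b + t • (a - b) = t • a + (1 - t) • b := by module
    rw [hφ]; simp only [this]; exact hconst t ht
  have hderivφ : HasDerivAt φ (fderiv ℝ H p (a - b)) t₀ := by
    have hcurve : HasDerivAt (fun t : ℝ => b + t • (a - b)) (a - b) t₀ := by
      have := (hasDerivAt_id t₀).smul_const (a - b)
      simpa using (this.const_add b)
    have hHd : HasFDerivAt H (fderiv ℝ H p) (b + t₀ • (a - b)) := by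
      rw [hpeq]; exact (hH.differentiable one_ne_zero p).hasFDerivAt
    exact hHd.comp_hasDerivAt t₀ hcurve
  have hzero : deriv φ t₀ = 0 := by
    have hnhds : Set.Icc (0:ℝ) 1 ∈ nhds t₀ :=
      Icc_mem_nhds ht₀mem.1 ht₀mem.2
    have hev : φ =ᶠ[nhds t₀] fun _ => c :=
      Filter.eventually_of_mem hnhds hφconst
    rw [hev.deriv_eq]
    simp
  rw [hderivφ.deriv] at hzero
  have key : ⟪gradient H p, a - b⟫ = 0 := by
    rw [inner_gradient_eq_fderiv]; exact hzero
  rw [real_inner_comm, show (b - a : EuclideanSpace ℝ (Fin n)) = -(a - b) by abel,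
    inner_neg_right, key, neg_zero]
end

section
/- Let n ≥ 1, let H : ℝⁿ → ℝ be a function, let a, b ∈ ℝⁿ, let c ∈ ℝ, and suppose H(ta + (1−t)b) = c for all t ∈ [0,1]. Let f : ℝ → ℝ be differentiable with sup_{t ∈ ℝ} |f'(t)| < 1, and define u : ℝⁿ → ℝ by u(x) = ((b+a)/2)·x + f(((b−a)/2)·x). Then u solves the Hamilton–Jacobi equation H(∇u) = c classically: for every x ∈ ℝⁿ, H(∇u(x)) = c. -/
open scoped RealInnerProductSpace

theorem stmt_4 (n : ℕ) (hn : 1 ≤ n) (H : EuclideanSpace ℝ (Fin n) → ℝ)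
    (a b : EuclideanSpace ℝ (Fin n)) (c : ℝ)
    (hconst : ∀ t : ℝ, t ∈ Set.Icc (0:ℝ) 1 → H (t • a + (1 - t) • b) = c)
    (f : ℝ → ℝ) (hf : Differentiable ℝ f)
    (M : ℝ) (hM : M < 1) (hf' : ∀ t : ℝ, |deriv f t| ≤ M)
    (u : EuclideanSpace ℝ (Fin n) → ℝ)
    (hu : ∀ x, u x = ⟪(2:ℝ)⁻¹ • (b + a), x⟫ + f ⟪(2:ℝ)⁻¹ • (b - a), x⟫) :
    ∀ x, H (gradient u x) = c := by
  intro x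
  set v : EuclideanSpace ℝ (Fin n) := (2:ℝ)⁻¹ • (b + a) with hv
  set w : EuclideanSpace ℝ (Fin n) := (2:ℝ)⁻¹ • (b - a) with hw
  set s : ℝ := deriv f ⟪w, x⟫ with hs
  -- gradient computation
  have h1 : HasFDerivAt (fun y => ⟪v, y⟫) (innerSL ℝ v) x := (innerSL ℝ v).hasFDerivAt
  have h2 : HasFDerivAt (fun y => ⟪w, y⟫) (innerSL ℝ w) x := (innerSL ℝ w).hasFDerivAt
  have h3 : HasFDerivAt (fun y => f ⟪w, y⟫) (s • innerSL ℝ w) x :=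
    (hf ⟪w, x⟫).hasDerivAt.comp_hasFDerivAt x h2
  have h4 : HasFDerivAt u (innerSL ℝ v + s • innerSL ℝ w) x := by
    have := h1.add h3
    apply this.congr_of_eventuallyEq
    filter_upwards with y using (hu y)
  have hgrad : HasGradientAt u (v + s • w) x := by
    rw [hasGradientAt_iff_hasFDerivAt]
    convert h4 using 1
    ext y
    simp [InnerProductSpace.toDual_apply_apply, inner_add_left, real_inner_smul_left]
    · rfl
    · ext y
      simp [InnerProductSpace.toDual_apply_apply, inner_add_left, real_inner_smul_left]
  rw [hgrad.gradient]
  -- |s| < 1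
  have hsM : |s| ≤ M := hf' _
  have hs1 : |s| < 1 := lt_of_le_of_lt hsM hM
  have hs1' : -1 < s := neg_lt_of_abs_lt hs1
  have hs1'' : s < 1 := lt_of_abs_lt hs1
  have key : v + s • w = ((1 - s)/2) • a + (1 - (1 - s)/2) • b := by
    rw [hv, hw]
    have : (1 : ℝ) - (1 - s)/2 = (1 + s)/2 := by ring
    rw [this]
    simp only [smul_add, smul_sub, smul_smul]
    module
  rw [key]
  exact hconst _ ⟨by linarith, by linarith⟩
end

section
/- (Lemma 2) Let n ≥ 2, let H : ℝⁿ → ℝ be continuously differentiable, let a, b ∈ ℝⁿ, and suppose H is constant on the closed segment [a,b] = { ta + (1−t)b : 0 ≤ t ≤ 1 }. Let f : ℝ → ℝ be twice continuously differentiable with sup_{t ∈ ℝ} |f'(t)| < 1, and define u : ℝⁿ → ℝ by u(x) = ((b+a)/2)·x + f(((b−a)/2)·x). Then u is a classical (C²) entire solution of the Aronsson equation: for every x ∈ ℝⁿ, D²u(x)(∇H(∇u(x)), ∇H(∇u(x))) = 0. -/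
open scoped RealInnerProductSpace

theorem stmt_6 (n : ℕ) (hn : 2 ≤ n) (H : EuclideanSpace ℝ (Fin n) → ℝ)
    (hH : ContDiff ℝ 1 H) (a b : EuclideanSpace ℝ (Fin n)) (c : ℝ)
    (hconst : ∀ t : ℝ, t ∈ Set.Icc (0:ℝ) 1 → H (t • a + (1 - t) • b) = c)
    (f : ℝ → ℝ) (hf : ContDiff ℝ 2 f)
    (M : ℝ) (hM : M < 1) (hf' : ∀ t : ℝ, |deriv f t| ≤ M)
    (u : EuclideanSpace ℝ (Fin n) → ℝ)
    (hu : ∀ x, u x = ⟪(2:ℝ)⁻¹ • (b + a), x⟫ + f ⟪(2:ℝ)⁻¹ • (b - a), x⟫) :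
    ContDiff ℝ 2 u ∧
      ∀ x, iteratedFDeriv ℝ 2 u x
        ![gradient H (gradient u x), gradient H (gradient u x)] = 0 := by
  set v : EuclideanSpace ℝ (Fin n) := (2:ℝ)⁻¹ • (b + a) with hv
  set w : EuclideanSpace ℝ (Fin n) := (2:ℝ)⁻¹ • (b - a) with hw
  have hu' : u = fun y => ⟪v, y⟫ + f ⟪w, y⟫ := funext hu
  subst hu'
  -- derivative of u
  have hder : ∀ y, HasFDerivAt (fun y => ⟪v, y⟫ + f ⟪w, y⟫)
      (innerSL ℝ v + deriv f ⟪w, y⟫ • innerSL ℝ w) y := by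
    intro y
    have h1 : HasFDerivAt (fun y : EuclideanSpace ℝ (Fin n) => ⟪v, y⟫) (innerSL ℝ v) y :=
      (innerSL ℝ v).hasFDerivAt
    have h2 : HasDerivAt f (deriv f ⟪w, y⟫) ⟪w, y⟫ :=
      ((hf.differentiable (by norm_num)) _).hasDerivAt
    have h3 : HasFDerivAt (fun y : EuclideanSpace ℝ (Fin n) => f ⟪w, y⟫)
        (deriv f ⟪w, y⟫ • innerSL ℝ w) y :=
      h2.comp_hasFDerivAt y (innerSL ℝ w).hasFDerivAt
    exact h1.add h3
  -- smoothness of u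
  have hCD : ContDiff ℝ 2 (fun y : EuclideanSpace ℝ (Fin n) => ⟪v, y⟫ + f ⟪w, y⟫) := by
    exact ((innerSL ℝ v).contDiff).add (hf.comp (innerSL ℝ w).contDiff)
  refine ⟨hCD, fun x => ?_⟩
  set s : ℝ := deriv f ⟪w, x⟫ with hs
  -- gradient of u at x
  have hgradu : gradient (fun y : EuclideanSpace ℝ (Fin n) => ⟪v, y⟫ + f ⟪w, y⟫) x
      = v + s • w := by
    apply HasGradientAt.gradient
    rw [hasGradientAt_iff_hasFDerivAt]
    refine (hder x).congr_fderiv ?_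
    ext y
    simp only [InnerProductSpace.toDual_apply_apply, ContinuousLinearMap.add_apply,
      ContinuousLinearMap.coe_smul', Pi.smul_apply, innerSL_apply_apply, smul_eq_mul,
      inner_add_left, real_inner_smul_left, hs]
  set p0 : EuclideanSpace ℝ (Fin n) := v + s • w with hp0
  have hsM : |s| ≤ M := hf' _
  have hs1 : |s| < 1 := lt_of_le_of_lt hsM hM
  -- H is constant on the line r ↦ v + r • w for r ∈ [-1,1]
  have hline : ∀ r : ℝ, r ∈ Set.Icc (-1:ℝ) 1 → H (v + r • w) = c := by
    intro r hr
    have ht : (1 - r) / 2 ∈ Set.Icc (0:ℝ) 1 := by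
      constructor <;> [linarith [hr.2]; linarith [hr.1]]
    have := hconst ((1 - r) / 2) ht
    have heq : v + r • w = ((1 - r) / 2) • a + (1 - (1 - r) / 2) • b := by
      rw [hv, hw]
      module
    rw [heq]
    exact this
  -- derivative of r ↦ H (v + r • w) at s is fderiv H p0 w, but the function is locally constant
  have hHd : DifferentiableAt ℝ H p0 := (hH.differentiable one_ne_zero) p0
  have hlineDeriv : HasDerivAt (fun r : ℝ => H (v + r • w)) (fderiv ℝ H p0 w) s := by
    have hl : HasDerivAt (fun r : ℝ => v + r • w) w s := by
      simpa using ((hasDerivAt_id s).smul_const w).const_add v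
    exact (hHd.hasFDerivAt.comp_hasDerivAt s hl)
  have hconst0 : HasDerivAt (fun r : ℝ => H (v + r • w)) 0 s := by
    have hmem : Set.Ioo (-1:ℝ) 1 ∈ nhds s :=
      Ioo_mem_nhds (by cases abs_lt.mp hs1; linarith) (abs_lt.mp hs1).2
    have hev : (fun r : ℝ => H (v + r • w)) =ᶠ[nhds s] fun _ => c :=
      Filter.eventuallyEq_of_mem hmem fun r hr => hline r ⟨le_of_lt hr.1, le_of_lt hr.2⟩
    exact (hasDerivAt_const s c).congr_of_eventuallyEq hev
  have hfHw : fderiv ℝ H p0 w = 0 := hlineDeriv.unique hconst0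
  -- inner product of gradient H p0 with w is zero
  have hinner : ⟪gradient H p0, w⟫ = 0 := by
    have hg : HasGradientAt H (gradient H p0) p0 := hHd.hasGradientAt
    have hfd : HasFDerivAt H (InnerProductSpace.toDual ℝ _ (gradient H p0)) p0 :=
      hasGradientAt_iff_hasFDerivAt.mp hg
    have : fderiv ℝ H p0 = InnerProductSpace.toDual ℝ _ (gradient H p0) := hfd.fderiv
    calc ⟪gradient H p0, w⟫ = InnerProductSpace.toDual ℝ _ (gradient H p0) w :=
          (InnerProductSpace.toDual_apply_apply).symm
      _ = fderiv ℝ H p0 w := by rw [this]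
      _ = 0 := hfHw
  set p : EuclideanSpace ℝ (Fin n) := gradient H p0 with hpdef
  have hwp : ⟪w, p⟫ = 0 := by rw [real_inner_comm]; exact hinner
  -- the map y ↦ (fderiv u y) p is constant
  have hgconst : (fun y => fderiv ℝ (fun y : EuclideanSpace ℝ (Fin n) => ⟪v, y⟫ + f ⟪w, y⟫) y p)
      = fun _ => ⟪v, p⟫ := by
    funext y
    rw [(hder y).fderiv]
    simp only [ContinuousLinearMap.add_apply, ContinuousLinearMap.coe_smul', Pi.smul_apply,
      innerSL_apply_apply, smul_eq_mul, hwp, mul_zero, add_zero]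
  -- second derivative applied to (p, p) is zero
  have hdiff2 : DifferentiableAt ℝ
      (fderiv ℝ (fun y : EuclideanSpace ℝ (Fin n) => ⟪v, y⟫ + f ⟪w, y⟫)) x :=
    ((hCD.fderiv_right (le_refl 2)).differentiable one_ne_zero) x
  have hcomp : HasFDerivAt
      (fun y => fderiv ℝ (fun y : EuclideanSpace ℝ (Fin n) => ⟪v, y⟫ + f ⟪w, y⟫) y p)
      ((ContinuousLinearMap.apply ℝ ℝ p).comp
        (fderiv ℝ (fderiv ℝ (fun y : EuclideanSpace ℝ (Fin n) => ⟪v, y⟫ + f ⟪w, y⟫)) x)) x :=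
    (ContinuousLinearMap.apply ℝ ℝ p).hasFDerivAt.comp x hdiff2.hasFDerivAt
  have hzero : HasFDerivAt
      (fun y => fderiv ℝ (fun y : EuclideanSpace ℝ (Fin n) => ⟪v, y⟫ + f ⟪w, y⟫) y p)
      (0 : EuclideanSpace ℝ (Fin n) →L[ℝ] ℝ) x := by
    rw [hgconst]; exact hasFDerivAt_const _ _
  have hkey : fderiv ℝ (fderiv ℝ (fun y : EuclideanSpace ℝ (Fin n) => ⟪v, y⟫ + f ⟪w, y⟫)) x p p
      = 0 := by
    have := hcomp.unique hzero
    have h2 := congrArg (fun (L : EuclideanSpace ℝ (Fin n) →L[ℝ] ℝ) => L p) this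
    simpa using h2
  rw [iteratedFDeriv_two_apply]
  simp only [Matrix.cons_val_zero, Matrix.cons_val_one, Matrix.head_cons]
  rw [hgradu]
  exact hkey
end

section
/- Let n ≥ 1, let H : ℝⁿ → ℝ be continuous, let a, b ∈ ℝⁿ with a ≠ b, let c ∈ ℝ, and suppose H(ta + (1−t)b) = c for all t ∈ [0,1]. Let f : ℝ → ℝ be Lipschitz continuous with some constant L < 1, and define u : ℝⁿ → ℝ by u(x) = ((b+a)/2)·x + f(((b−a)/2)·x). Then u is an almost-everywhere solution of the Hamilton–Jacobi equation H(Du) = c: for Lebesgue-almost every x ∈ ℝⁿ, u is differentiable at x, the gradient ∇u(x) lies in the closed segment [a,b], and H(∇u(x)) = c. -/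
open scoped RealInnerProductSpace

theorem stmt_10 (n : ℕ) (hn : 1 ≤ n) (H : EuclideanSpace ℝ (Fin n) → ℝ)
    (hH : Continuous H) (a b : EuclideanSpace ℝ (Fin n)) (hab : a ≠ b) (c : ℝ)
    (hconst : ∀ t : ℝ, t ∈ Set.Icc (0:ℝ) 1 → H (t • a + (1 - t) • b) = c)
    (L : ℝ) (hL : L < 1) (f : ℝ → ℝ)
    (hf : ∀ s t : ℝ, |f s - f t| ≤ L * |s - t|)
    (u : EuclideanSpace ℝ (Fin n) → ℝ)
    (hu : ∀ x, u x = ⟪(2:ℝ)⁻¹ • (b + a), x⟫ + f ⟪(2:ℝ)⁻¹ • (b - a), x⟫) :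
    ∀ᵐ x ∂(MeasureTheory.volume : MeasureTheory.Measure (EuclideanSpace ℝ (Fin n))),
      DifferentiableAt ℝ u x ∧ gradient u x ∈ segment ℝ a b ∧
        H (gradient u x) = c := by
  set v : EuclideanSpace ℝ (Fin n) := (2:ℝ)⁻¹ • (b + a) with hv
  set w : EuclideanSpace ℝ (Fin n) := (2:ℝ)⁻¹ • (b - a) with hw
  have hw0 : w ≠ 0 := by
    simp only [hw, ne_eq, smul_eq_zero, inv_eq_zero, OfNat.ofNat_ne_zero, false_or,
      sub_eq_zero]
    exact fun h => hab h.symm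
  have hL0 : 0 ≤ L := by
    have := hf 0 1
    have h0 : (0:ℝ) ≤ |f 0 - f 1| := abs_nonneg _
    simp only [zero_sub, abs_neg, abs_one, mul_one] at this
    linarith
  have flip : LipschitzWith ⟨L, hL0⟩ f := by
    apply LipschitzWith.of_dist_le_mul
    intro s t
    rw [Real.dist_eq, Real.dist_eq]; exact hf s t
  -- u is Lipschitz
  have hueq : u = fun x => (innerSL ℝ v) x + f ((innerSL ℝ w) x) := by
    funext x; simpa using hu x
  have hulip := (innerSL ℝ v).lipschitz.add (flip.comp (innerSL ℝ w).lipschitz)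
  have hulip2 : LipschitzWith (‖(innerSL ℝ) v‖₊ + ⟨L, hL0⟩ * ‖(innerSL ℝ) w‖₊) u := by
    rw [hueq]; exact hulip
  clear hulip
  filter_upwards [hulip2.ae_differentiableAt] with x hx
  refine ⟨hx, ?_⟩
  -- f is differentiable at s := ⟪w, x⟫
  set s : ℝ := ⟪w, x⟫ with hs
  have hwn : (0:ℝ) < ‖w‖^2 := by
    have := norm_pos_iff.2 hw0
    positivity
  set φ : ℝ → EuclideanSpace ℝ (Fin n) := fun t => x + ((t - s) / ‖w‖^2) • w with hφ
  have hφs : φ s = x := by simp [hφ]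
  have hφdiff : DifferentiableAt ℝ φ s := by
    apply DifferentiableAt.const_add
    exact (((differentiableAt_id.sub_const s).div_const _).smul_const w)
  have hinnerφ : ∀ t, ⟪w, φ t⟫ = t := by
    intro t
    show ⟪w, x + ((t - s) / ‖w‖^2) • w⟫ = t
    rw [inner_add_right, real_inner_smul_right, real_inner_self_eq_norm_sq,
      div_mul_cancel₀ _ (ne_of_gt hwn), ← hs]
    ring
  have hfeq : f = fun t => u (φ t) - ⟪v, φ t⟫ := by
    funext t
    rw [hu (φ t), hinnerφ t]
    ring
  have hfd : DifferentiableAt ℝ f s := by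
    rw [hfeq]
    apply DifferentiableAt.sub
    · exact (hφs ▸ hx).comp s hφdiff
    · exact ((innerSL ℝ v).differentiableAt).comp s hφdiff
  set d : ℝ := deriv f s with hd
  have hder : HasDerivAt f d s := hfd.hasDerivAt
  have hdle : |d| ≤ L := by
    have h1 : ‖fderiv ℝ f s‖ ≤ (⟨L, hL0⟩ : NNReal) := hfd.hasFDerivAt.le_of_lipschitz flip
    have h2 : d = (fderiv ℝ f s) 1 := (fderiv_apply_one_eq_deriv).symm
    calc |d| = ‖(fderiv ℝ f s) 1‖ := by rw [h2]; rfl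
      _ ≤ ‖fderiv ℝ f s‖ * ‖(1:ℝ)‖ := (fderiv ℝ f s).le_opNorm 1
      _ ≤ L := by simpa using h1
  -- gradient computation
  have hfder : HasFDerivAt u (innerSL ℝ v + d • innerSL ℝ w) x := by
    rw [hueq]
    exact ((innerSL ℝ v).hasFDerivAt).add
      (hder.comp_hasFDerivAt x ((innerSL ℝ w).hasFDerivAt))
  have hgrad : HasGradientAt u (v + d • w) x := by
    rw [hasGradientAt_iff_hasFDerivAt]
    convert hfder using 1
    · rfl
    ext y
    simp [InnerProductSpace.toDual_apply_apply, inner_add_left, real_inner_smul_left]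
    ext y
    simp [InnerProductSpace.toDual_apply_apply, inner_add_left, real_inner_smul_left]
  have hgx : gradient u x = v + d • w := hgrad.gradient
  have habs := abs_le.1 (hdle.trans hL.le)
  have hcomb : v + d • w = ((1 - d)/2) • a + (1 - (1 - d)/2) • b := by
    rw [hv, hw]
    have : (1 : ℝ) - (1 - d)/2 = (1 + d)/2 := by ring
    rw [this]
    module
  have ht0 : (0:ℝ) ≤ (1 - d)/2 := by linarith [habs.2]
  have ht1 : (1 - d)/2 ≤ (1:ℝ) := by linarith [habs.1]
  constructor
  · rw [hgx, hcomb]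
    exact ⟨(1 - d)/2, 1 - (1 - d)/2, ht0, by linarith, by ring, rfl⟩
  · rw [hgx, hcomb]
    exact hconst _ ⟨ht0, ht1⟩
end
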